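/- Let d be an even positive integer, let ε : {0,…,d−1} → {−1,1} be a sign pattern, and let r₁ < r₂ be two fixed real numbers. Then the set of coefficient vectors (a_0,…,a_{d−1}) ∈ ℝ^d such that the monic polynomial Q = x^d + a_{d−1}x^{d−1} + ⋯ + a_0 has sign pattern ε and has exactly two real roots, both simple, equal to r₁ and r₂, is convex. -/
import Mathlib

open Polynomial Filter Set

/-- The monic polynomial `x^d + a_{d-1} x^{d-1} + ⋯ + a_1 x + a_0`
associated to a coefficient vector `a ∈ ℝ^d`. -/
noncomputable def Qpoly (d : ℕ) (a : Fin d → ℝ) : Polynomial ℝ :=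
  X ^ d + ∑ j : Fin d, C (a j) * X ^ (j : ℕ)

lemma Qpoly_comb (d : ℕ) (a b : Fin d → ℝ) (t s : ℝ) (hts : t + s = 1) :
    Qpoly d (t • a + s • b) = t • Qpoly d a + s • Qpoly d b := by
  have hC : (C t : ℝ[X]) + C s = 1 := by rw [← C_add, hts, C_1]
  simp only [Qpoly, smul_eq_C_mul, Pi.add_apply, Pi.smul_apply, smul_eq_mul, C_add, C_mul,
    mul_add, add_mul, Finset.mul_sum, Finset.sum_add_distrib, mul_assoc]
  linear_combination (-(X ^ d) : ℝ[X]) * hC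

lemma Qpoly_degree_lt (d : ℕ) (a : Fin d → ℝ) :
    (∑ j : Fin d, C (a j) * X ^ (j : ℕ)).degree < (d : WithBot ℕ) := by
  apply lt_of_le_of_lt (Polynomial.degree_sum_le _ _)
  rw [Finset.sup_lt_iff (by exact_mod_cast WithBot.bot_lt_coe d)]
  intro j _
  exact lt_of_le_of_lt (Polynomial.degree_C_mul_X_pow_le _ _) (by exact_mod_cast j.2)

lemma Qpoly_monic (d : ℕ) (a : Fin d → ℝ) : (Qpoly d a).Monic :=
  (monic_X_pow d).add_of_left (by simpa using Qpoly_degree_lt d a)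

lemma Qpoly_degree (d : ℕ) (a : Fin d → ℝ) : (Qpoly d a).degree = d := by
  rw [Qpoly, degree_add_eq_left_of_degree_lt (by simpa using Qpoly_degree_lt d a), degree_X_pow]

lemma Qpoly_tendsto_atTop (d : ℕ) (hd : 0 < d) (a : Fin d → ℝ) :
    Tendsto (fun x => (Qpoly d a).eval x) atTop atTop := by
  apply Polynomial.tendsto_atTop_of_leadingCoeff_nonneg
  · rw [Qpoly_degree]; exact_mod_cast hd
  · rw [(Qpoly_monic d a).leadingCoeff]; norm_num

lemma Qpoly_tendsto_atBot (d : ℕ) (hd : 0 < d) (hdeven : Even d) (a : Fin d → ℝ) :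
    Tendsto (fun x => (Qpoly d a).eval x) atBot atTop := by
  set P := Qpoly d a with hP
  set Pn := P.comp (-X) with hPn
  have hnatP : P.natDegree = d := natDegree_eq_of_degree_eq_some (Qpoly_degree d a)
  have hdeg : Pn.natDegree = d := by
    rw [hPn, natDegree_comp, hnatP]
    simp
  have hlc : Pn.leadingCoeff = 1 := by
    rw [hPn, Polynomial.leadingCoeff_comp (by simp), (Qpoly_monic d a).leadingCoeff, hnatP]
    simp [hdeven.neg_one_pow]
  have hT : Tendsto (fun x => Pn.eval x) atTop atTop := by
    apply Polynomial.tendsto_atTop_of_leadingCoeff_nonneg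
    · rw [degree_eq_natDegree (fun h => by simp [h] at hlc), hdeg]; exact_mod_cast hd
    · rw [hlc]; norm_num
  have : (fun x => P.eval x) = (fun y => Pn.eval y) ∘ (fun x : ℝ => -x) := by
    funext x; simp [hPn, eval_comp]
  rw [this]
  exact hT.comp tendsto_neg_atBot_atTop

lemma Qpoly_key (d : ℕ) (hd : 0 < d) (hdeven : Even d) {r₁ r₂ : ℝ} (hr : r₁ < r₂)
    (a : Fin d → ℝ)
    (h1 : (Qpoly d a).eval r₁ = 0) (h2 : (Qpoly d a).eval r₂ = 0)
    (hd1 : (Polynomial.derivative (Qpoly d a)).eval r₁ ≠ 0)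
    (hd2 : (Polynomial.derivative (Qpoly d a)).eval r₂ ≠ 0)
    (hroots : ∀ x : ℝ, (Qpoly d a).eval x = 0 → x = r₁ ∨ x = r₂) :
    (∀ x, x < r₁ → 0 < (Qpoly d a).eval x) ∧
    (∀ x, r₁ < x → x < r₂ → (Qpoly d a).eval x < 0) ∧
    (∀ x, r₂ < x → 0 < (Qpoly d a).eval x) ∧
    (Polynomial.derivative (Qpoly d a)).eval r₁ < 0 ∧
    0 < (Polynomial.derivative (Qpoly d a)).eval r₂ := by
  set P := Qpoly d a with hP
  have hcont : Continuous fun x => P.eval x := P.continuous_aeval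
  -- right of r₂
  have hright : ∀ x, r₂ < x → 0 < P.eval x := by
    intro x hx
    rcases lt_trichotomy (P.eval x) 0 with hneg | hzero | hpos
    · obtain ⟨y, hy0, hyx⟩ := ((Qpoly_tendsto_atTop d hd a).eventually_gt_atTop 0).and
        (eventually_ge_atTop x) |>.exists
      have h0 : (0 : ℝ) ∈ Set.Ioo (P.eval x) (P.eval y) := ⟨hneg, hy0⟩
      obtain ⟨z, hz, hz0⟩ := intermediate_value_Ioo hyx hcont.continuousOn h0
      rcases hroots z hz0 with rfl | rfl
      · exact absurd hz.1 (by linarith)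
      · exact absurd hz.1 (by linarith)
    · rcases hroots x hzero with rfl | rfl <;> linarith
    · exact hpos
  -- left of r₁
  have hleft : ∀ x, x < r₁ → 0 < P.eval x := by
    intro x hx
    rcases lt_trichotomy (P.eval x) 0 with hneg | hzero | hpos
    · obtain ⟨y, hy0, hyx⟩ := ((Qpoly_tendsto_atBot d hd hdeven a).eventually_gt_atTop 0).and
        (eventually_le_atBot x) |>.exists
      have h0 : (0 : ℝ) ∈ Set.Ioo (P.eval x) (P.eval y) := ⟨hneg, hy0⟩
      obtain ⟨z, hz, hz0⟩ := intermediate_value_Ioo' hyx hcont.continuousOn h0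
      rcases hroots z hz0 with rfl | rfl
      · exact absurd hz.2 (by linarith)
      · exact absurd hz.2 (by linarith)
    · rcases hroots x hzero with rfl | rfl <;> linarith
    · exact hpos
  -- derivative at r₂ positive
  have hder2 : 0 < (Polynomial.derivative P).eval r₂ := by
    have hslope : Tendsto (slope (fun x => P.eval x) r₂) (nhdsWithin r₂ (Set.Ioi r₂))
        (nhds ((Polynomial.derivative P).eval r₂)) :=
      ((hasDerivAt_iff_tendsto_slope).1 (P.hasDerivAt r₂)).mono_left
        (nhdsWithin_mono _ (fun y hy => ne_of_gt hy))
    have hev : ∀ᶠ y in nhdsWithin r₂ (Set.Ioi r₂), 0 ≤ slope (fun x => P.eval x) r₂ y := by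
      filter_upwards [self_mem_nhdsWithin] with y hy
      have : 0 < P.eval y := hright y hy
      rw [slope_def_field]
      have : 0 ≤ (P.eval y - P.eval r₂) / (y - r₂) := by
        apply div_nonneg (by rw [h2]; linarith) (by simp at hy; linarith)
      simpa [div_eq_inv_mul] using this
    have := ge_of_tendsto hslope hev
    rcases lt_or_eq_of_le this with h | h
    · exact h
    · exact absurd h.symm hd2
  -- derivative at r₁ negative
  have hder1 : (Polynomial.derivative P).eval r₁ < 0 := by
    have hslope : Tendsto (slope (fun x => P.eval x) r₁) (nhdsWithin r₁ (Set.Iio r₁))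
        (nhds ((Polynomial.derivative P).eval r₁)) :=
      ((hasDerivAt_iff_tendsto_slope).1 (P.hasDerivAt r₁)).mono_left
        (nhdsWithin_mono _ (fun y hy => ne_of_lt hy))
    have hev : ∀ᶠ y in nhdsWithin r₁ (Set.Iio r₁), slope (fun x => P.eval x) r₁ y ≤ 0 := by
      filter_upwards [self_mem_nhdsWithin] with y hy
      have hy' : y < r₁ := hy
      have hpy : 0 < P.eval y := hleft y hy'
      rw [slope_def_field]
      have : (P.eval y - P.eval r₁) / (y - r₁) ≤ 0 := by
        apply div_nonpos_of_nonneg_of_nonpos (by rw [h1]; linarith) (by linarith)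
      simpa [div_eq_inv_mul] using this
    have := le_of_tendsto hslope hev
    rcases lt_or_eq_of_le this with h | h
    · exact h
    · exact absurd h hd1
  -- interior
  have hmid : ∀ x, r₁ < x → x < r₂ → P.eval x < 0 := by
    intro x hx1 hx2
    rcases lt_trichotomy (P.eval x) 0 with hneg | hzero | hpos
    · exact hneg
    · rcases hroots x hzero with rfl | rfl <;> linarith
    · exfalso
      -- find y ∈ (x, r₂) with P.eval y < 0, using derivative at r₂
      have hslope : Tendsto (slope (fun x => P.eval x) r₂) (nhdsWithin r₂ (Set.Iio r₂))
          (nhds ((Polynomial.derivative P).eval r₂)) :=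
        ((hasDerivAt_iff_tendsto_slope).1 (P.hasDerivAt r₂)).mono_left
          (nhdsWithin_mono _ (fun y hy => ne_of_lt hy))
      have hpos' : ∀ᶠ y in nhdsWithin r₂ (Set.Iio r₂),
          0 < slope (fun x => P.eval x) r₂ y :=
        hslope.eventually (eventually_gt_nhds hder2)
      have hIoo : Set.Ioo x r₂ ∈ nhdsWithin r₂ (Set.Iio r₂) :=
        Ioo_mem_nhdsLT_of_mem ⟨hx2, le_refl r₂⟩
      obtain ⟨y, hsl, hyIoo⟩ := (hpos'.and (eventually_of_mem hIoo (fun _ h => h))).exists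
      have hyneg : P.eval y < 0 := by
        rw [slope_def_field] at hsl
        have hyr : y - r₂ < 0 := by have := hyIoo.2; linarith
        by_contra hcon
        push_neg at hcon
        have : (P.eval y - P.eval r₂) / (y - r₂) ≤ 0 :=
          div_nonpos_of_nonneg_of_nonpos (by rw [h2]; linarith) (by linarith)
        rw [div_eq_inv_mul] at this
        simp [div_eq_inv_mul] at hsl
        linarith
      have h0 : (0 : ℝ) ∈ Set.Ioo (P.eval y) (P.eval x) := ⟨hyneg, hpos⟩
      obtain ⟨z, hz, hz0⟩ := intermediate_value_Ioo' (le_of_lt hyIoo.1) hcont.continuousOn h0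
      rcases hroots z hz0 with rfl | rfl
      · have := hz.1; linarith
      · have := hz.2; have := hyIoo.2; linarith
  exact ⟨hleft, hmid, hright, hder1, hder2⟩

lemma comb_pos {t s A B : ℝ} (ht : 0 ≤ t) (hs : 0 ≤ s) (hts : t + s = 1)
    (hA : 0 < A) (hB : 0 < B) : 0 < t * A + s * B := by
  rcases eq_or_lt_of_le ht with h | h
  · rw [← h] at hts ⊢; simp at hts ⊢; nlinarith
  · nlinarith

theorem stmt17 (d : ℕ) (hd : 0 < d) (hdeven : Even d)
    (ε : Fin d → ℝ) (hε : ∀ j, ε j = 1 ∨ ε j = -1)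
    (r₁ r₂ : ℝ) (hr : r₁ < r₂) :
    Convex ℝ {a : Fin d → ℝ | (∀ j : Fin d, 0 < ε j * a j) ∧
      (Qpoly d a).eval r₁ = 0 ∧ (Qpoly d a).eval r₂ = 0 ∧
      (Polynomial.derivative (Qpoly d a)).eval r₁ ≠ 0 ∧
      (Polynomial.derivative (Qpoly d a)).eval r₂ ≠ 0 ∧
      ∀ x : ℝ, (Qpoly d a).eval x = 0 → x = r₁ ∨ x = r₂} := by
  intro a ha b hb t s ht hs hts
  obtain ⟨hasign, ha1, ha2, had1, had2, haroots⟩ := ha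
  obtain ⟨hbsign, hb1, hb2, hbd1, hbd2, hbroots⟩ := hb
  obtain ⟨haL, haM, haR, haD1, haD2⟩ := Qpoly_key d hd hdeven hr a ha1 ha2 had1 had2 haroots
  obtain ⟨hbL, hbM, hbR, hbD1, hbD2⟩ := Qpoly_key d hd hdeven hr b hb1 hb2 hbd1 hbd2 hbroots
  have hcomb := Qpoly_comb d a b t s hts
  have heval : ∀ x : ℝ, (Qpoly d (t • a + s • b)).eval x
      = t * (Qpoly d a).eval x + s * (Qpoly d b).eval x := by
    intro x; rw [hcomb]; simp
  have hderiv : ∀ x : ℝ, (Polynomial.derivative (Qpoly d (t • a + s • b))).eval x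
      = t * (Polynomial.derivative (Qpoly d a)).eval x
        + s * (Polynomial.derivative (Qpoly d b)).eval x := by
    intro x; rw [hcomb]; simp
  refine ⟨?_, ?_, ?_, ?_, ?_, ?_⟩
  · intro j
    have : ε j * (t • a + s • b) j = t * (ε j * a j) + s * (ε j * b j) := by
      simp [Pi.add_apply, Pi.smul_apply]; ring
    rw [this]
    exact comb_pos ht hs hts (hasign j) (hbsign j)
  · rw [heval, ha1, hb1]; ring
  · rw [heval, ha2, hb2]; ring
  · rw [hderiv]
    have : 0 < t * (-(Polynomial.derivative (Qpoly d a)).eval r₁)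
        + s * (-(Polynomial.derivative (Qpoly d b)).eval r₁) :=
      comb_pos ht hs hts (by linarith) (by linarith)
    intro h; nlinarith [this]
  · rw [hderiv]
    have := comb_pos ht hs hts haD2 hbD2
    intro h; rw [h] at this; linarith
  · intro x hx
    rw [heval] at hx
    rcases lt_trichotomy x r₁ with h | h | h
    · have := comb_pos ht hs hts (haL x h) (hbL x h); linarith
    · exact Or.inl h
    · rcases lt_trichotomy x r₂ with h' | h' | h'
      · have := comb_pos ht hs hts (by linarith [haM x h h'] : 0 < -(Qpoly d a).eval x)
          (by linarith [hbM x h h'] : 0 < -(Qpoly d b).eval x)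
        exfalso; nlinarith
      · exact Or.inr h'
      · have := comb_pos ht hs hts (haR x h') (hbR x h'); linarith
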